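/- Let C ⊂ ℝ^d be a closed convex cone with vertex at the origin and nonempty interior (equivalently, positive Lebesgue measure), and suppose that for every unit vector e with −e ∈ ∂C one has e ∈ C. Then C is a closed half-space, i.e., C = {x : x·ν ≤ 0} for some unit vector ν. -/

import Mathlib

open Pointwise


/-- A proper closed convex cone `C ⊂ ℝ^d` with vertex at the origin and nonempty
interior, such that `e ∈ C` whenever `-e` is a unit vector on `∂C`, is a closed
half-space `{x : x·ν ≤ 0}`. -/
theorem cone_is_halfSpace {d : ℕ} (C : Set (EuclideanSpace ℝ (Fin d)))
    (hclosed : IsClosed C) (hconv : Convex ℝ C)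
    (hcone : ∀ x ∈ C, ∀ lam : ℝ, 0 ≤ lam → lam • x ∈ C)
    (hint : (interior C).Nonempty) (hproper : C ≠ Set.univ)
    (hrefl : ∀ e : EuclideanSpace ℝ (Fin d), ‖e‖ = 1 → -e ∈ frontier C → e ∈ C) :
    ∃ ν : EuclideanSpace ℝ (Fin d), ‖ν‖ = 1 ∧
      C = {x | inner (𝕜 := ℝ) x ν ≤ (0 : ℝ)} := by
  classical
  obtain ⟨y, hy⟩ := hint
  have hyC : y ∈ C := interior_subset hy
  have h0 : (0 : EuclideanSpace ℝ (Fin d)) ∈ C := by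
    simpa using hcone y hyC 0 le_rfl
  -- separating functional
  obtain ⟨x₀, hx₀⟩ : ∃ x₀, x₀ ∉ C := by
    by_contra h; push_neg at h; exact hproper (Set.eq_univ_of_forall h)
  obtain ⟨f, u, hfu, hux⟩ := geometric_hahn_banach_closed_point hconv hclosed hx₀
  have hu0 : 0 < u := by simpa using hfu 0 h0
  have hfC : ∀ x ∈ C, f x ≤ 0 := by
    intro x hx
    by_contra h
    push_neg at h
    have hmem := hcone x hx ((u + 1) / f x) (div_nonneg (by linarith) h.le)
    have h2 := hfu _ hmem
    rw [map_smul, smul_eq_mul, div_mul_cancel₀ _ h.ne'] at h2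
    linarith
  set ν₀ := (InnerProductSpace.toDual ℝ (EuclideanSpace ℝ (Fin d))).symm f with hν₀
  have hν₀app : ∀ x, inner (𝕜 := ℝ) ν₀ x = f x := fun x =>
    InnerProductSpace.toDual_symm_apply
  have hν₀ne : ν₀ ≠ 0 := by
    intro h
    have := hν₀app x₀
    rw [h, inner_zero_left] at this
    linarith
  have hν₀norm : (0 : ℝ) < ‖ν₀‖ := norm_pos_iff.2 hν₀ne
  set ν := ‖ν₀‖⁻¹ • ν₀ with hνdef
  have hν : ‖ν‖ = 1 := by
    rw [hνdef, norm_smul, norm_inv, norm_norm, inv_mul_cancel₀ hν₀norm.ne']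
  have hCν : ∀ x ∈ C, inner (𝕜 := ℝ) x ν ≤ 0 := by
    intro x hx
    have : inner (𝕜 := ℝ) x ν = ‖ν₀‖⁻¹ * f x := by
      rw [hνdef, real_inner_smul_right, real_inner_comm, hν₀app]
    rw [this]
    exact mul_nonpos_of_nonneg_of_nonpos (inv_nonneg.2 hν₀norm.le) (hfC x hx)
  -- frontier is invariant under positive scaling
  have hfrontC : frontier C ⊆ C := hclosed.frontier_subset
  have hfr : ∀ z, z ∈ frontier C ↔ z ∈ C ∧ z ∉ interior C := by
    intro z
    rw [frontier, hclosed.closure_eq]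
    exact Iff.rfl
  have hsmul_frontier : ∀ z ∈ frontier C, ∀ lam : ℝ, 0 < lam → lam • z ∈ frontier C := by
    intro z hz lam hlam
    rw [hfr] at hz ⊢
    refine ⟨hcone z hz.1 lam hlam.le, fun hmem => hz.2 ?_⟩
    have h1 : z ∈ lam⁻¹ • interior C := by
      rw [Set.mem_smul_set_iff_inv_smul_mem₀ (inv_ne_zero hlam.ne')]
      simpa using hmem
    have h2 : lam⁻¹ • interior C = interior (lam⁻¹ • C) :=
      (interior_smul₀ (inv_ne_zero hlam.ne') C).symm
    have h3 : lam⁻¹ • C ⊆ C := by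
      rintro _ ⟨w, hw, rfl⟩
      exact hcone w hw _ (inv_nonneg.2 hlam.le)
    rw [h2] at h1
    exact interior_mono h3 h1
  -- negation of frontier points belongs to C
  have hneg : ∀ z ∈ frontier C, -z ∈ C := by
    intro z hz
    rcases eq_or_ne z 0 with rfl | hz0
    · simpa using h0
    · have hnz : (0 : ℝ) < ‖z‖ := norm_pos_iff.2 hz0
      have h1 : ‖z‖⁻¹ • z ∈ frontier C := hsmul_frontier z hz _ (inv_pos.2 hnz)
      have he : ‖-(‖z‖⁻¹ • z)‖ = 1 := by
        rw [norm_neg, norm_smul, norm_inv, norm_norm, inv_mul_cancel₀ hnz.ne']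
      have hmem := hrefl _ he (by simpa using h1)
      have hmem2 := hcone _ hmem ‖z‖ hnz.le
      have : ‖z‖ • -(‖z‖⁻¹ • z) = -z := by
        rw [smul_neg, smul_smul, mul_inv_cancel₀ hnz.ne', one_smul]
      rwa [this] at hmem2
  -- frontier lies in the hyperplane
  have hfront0 : ∀ z ∈ frontier C, inner (𝕜 := ℝ) z ν = 0 := by
    intro z hz
    have h1 := hCν z (hfrontC hz)
    have h2 := hCν _ (hneg z hz)
    rw [inner_neg_left] at h2
    linarith
  -- the interior point is strictly inside the half-space
  have hyν : inner (𝕜 := ℝ) y ν < 0 := by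
    obtain ⟨ε, hε, hball⟩ := Metric.mem_nhds_iff.1 (mem_interior_iff_mem_nhds.1 hy)
    have hmem : y + (ε / 2) • ν ∈ C := by
      apply hball
      rw [Metric.mem_ball, dist_eq_norm]
      have : y + (ε / 2) • ν - y = (ε / 2) • ν := by abel
      rw [this, norm_smul, hν, mul_one, Real.norm_eq_abs, abs_of_pos (by linarith)]
      linarith
    have h2 := hCν _ hmem
    rw [inner_add_left, real_inner_smul_left, real_inner_self_eq_norm_mul_norm, hν] at h2
    nlinarith
  -- the open half-space is inside C by connectedness
  have hH : {x : EuclideanSpace ℝ (Fin d) | inner (𝕜 := ℝ) x ν < 0} ⊆ C := by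
    have hlin : IsLinearMap ℝ (fun x : EuclideanSpace ℝ (Fin d) => inner (𝕜 := ℝ) x ν) :=
      ⟨fun a b => inner_add_left a b ν, fun c x => real_inner_smul_left x ν c⟩
    have hpre : IsPreconnected {x : EuclideanSpace ℝ (Fin d) | inner (𝕜 := ℝ) x ν < 0} :=
      (convex_halfSpace_lt hlin 0).isPreconnected
    have hcover : {x : EuclideanSpace ℝ (Fin d) | inner (𝕜 := ℝ) x ν < 0} ⊆
        interior C ∪ Cᶜ := by
      intro x hx
      by_cases hxC : x ∈ C
      · left
        by_contra hxint
        have hxf : x ∈ frontier C := (hfr x).2 ⟨hxC, hxint⟩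
        have := hfront0 x hxf
        simp only [Set.mem_setOf_eq] at hx
        linarith
      · right; exact hxC
    have hdisj : Disjoint (interior C) Cᶜ :=
      Set.disjoint_compl_right_iff_subset.2 interior_subset
    have hsub := hpre.subset_left_of_subset_union isOpen_interior hclosed.isOpen_compl
      hdisj hcover ⟨y, hyν, hy⟩
    exact fun x hx => interior_subset (hsub hx)
  refine ⟨ν, hν, Set.Subset.antisymm (fun x hx => hCν x hx) ?_⟩
  intro x hx
  simp only [Set.mem_setOf_eq] at hx
  have hseq : ∀ n : ℕ, x + (1 / ((n : ℝ) + 1)) • y ∈ C := by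
    intro n
    apply hH
    simp only [Set.mem_setOf_eq, inner_add_left, real_inner_smul_left]
    have hpos : (0 : ℝ) < 1 / ((n : ℝ) + 1) := by positivity
    nlinarith
  have hlim : Filter.Tendsto (fun n : ℕ => x + (1 / ((n : ℝ) + 1)) • y)
      Filter.atTop (nhds x) := by
    have h1 := ((tendsto_one_div_add_atTop_nhds_zero_nat : Filter.Tendsto (fun n : ℕ => 1 / ((n : ℝ) + 1)) Filter.atTop (nhds 0)).smul_const y).const_add x
    simpa using h1
  exact hclosed.mem_of_tendsto hlim (Filter.Eventually.of_forall hseq)
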